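/- For all integers a₁, a₂, the set {(m₁,m₂,m₃) ∈ ℕ₀³ : a₁ = 3(m₁+m₂) and a₂ = m₃ − m₁ − 2m₂} is finite, and its cardinality ℘(a₁,a₂) equals 0 if a₁ < 0 or 3 does not divide a₁, and equals max(0, a₁/3 + 1 + min(0, a₂ + a₁/3)) if a₁ ≥ 0 and 3 divides a₁. -/
import Mathlib


/-- The set of triples `(m₁,m₂,m₃) ∈ ℕ₀³` with `a₁ = 3(m₁+m₂)` and `a₂ = m₃ − m₁ − 2m₂`. -/
def partitionSet (a₁ a₂ : ℤ) : Set (ℕ × ℕ × ℕ) :=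
  {m | a₁ = 3 * ((m.1 : ℤ) + (m.2.1 : ℤ)) ∧ a₂ = (m.2.2 : ℤ) - (m.1 : ℤ) - 2 * (m.2.1 : ℤ)}

/-- **Formula for the partition function ℘.**
For all integers `a₁, a₂` the set of triples `(m₁,m₂,m₃) ∈ ℕ₀³` with `a₁ = 3(m₁+m₂)` and
`a₂ = m₃ − m₁ − 2m₂` is finite; its cardinality `℘(a₁,a₂)` is `0` if `a₁ < 0` or `3 ∤ a₁`,
and equals `max(0, a₁/3 + 1 + min(0, a₂ + a₁/3))` if `a₁ ≥ 0` and `3 ∣ a₁`. -/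
theorem partitionSet_finite_and_card (a₁ a₂ : ℤ) :
    (partitionSet a₁ a₂).Finite ∧
    ((a₁ < 0 ∨ ¬ (3 ∣ a₁)) → (partitionSet a₁ a₂).ncard = 0) ∧
    (0 ≤ a₁ → 3 ∣ a₁ →
      ((partitionSet a₁ a₂).ncard : ℤ) = max 0 (a₁ / 3 + 1 + min 0 (a₂ + a₁ / 3))) := by
  by_cases h : 0 ≤ a₁ ∧ 3 ∣ a₁
  · obtain ⟨h0, c, rfl⟩ := h
    have hc : 0 ≤ c := by omega
    set k : ℕ := c.toNat with hk
    have hkc : (k : ℤ) = c := Int.toNat_of_nonneg hc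
    set S : Finset ℕ := (Finset.range (k + 1)).filter (fun i => (i : ℤ) ≤ a₂ + 2 * c)
      with hS
    set g : ℕ → ℕ × ℕ × ℕ := fun i => (i, k - i, (a₂ + 2 * c - i).toNat) with hg
    have hginj : Function.Injective g := by
      intro i j hij
      simpa [hg] using congrArg Prod.fst hij
    have hset : partitionSet (3 * c) a₂ = ↑(S.image g) := by
      ext ⟨m₁, m₂, m₃⟩
      simp only [partitionSet, Set.mem_setOf_eq, Finset.coe_image, Set.mem_image,
        Finset.mem_coe, hS, Finset.mem_filter, Finset.mem_range, hg, Prod.mk.injEq]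
      constructor
      · rintro ⟨h1, h2⟩
        exact ⟨m₁, ⟨by omega, by omega⟩, rfl, by omega, by omega⟩
      · rintro ⟨i, ⟨hi1, hi2⟩, rfl, rfl, rfl⟩
        constructor <;> omega
    have hScard : S.card = min (k + 1) ((a₂ + 2 * c + 1).toNat) := by
      have : S = Finset.range (min (k + 1) ((a₂ + 2 * c + 1).toNat)) := by
        ext i
        simp only [hS, Finset.mem_filter, Finset.mem_range, lt_min_iff]
        omega
      rw [this, Finset.card_range]
    have hncard : (partitionSet (3 * c) a₂).ncard = min (k + 1) ((a₂ + 2 * c + 1).toNat) := by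
      rw [hset, Set.ncard_coe_finset, Finset.card_image_of_injective _ hginj, hScard]
    have hdiv : 3 * c / 3 = c := by omega
    refine ⟨by rw [hset]; exact (S.image g).finite_toSet, ?_, ?_⟩
    · intro hcon
      rcases hcon with hcon | hcon
      · omega
      · exact absurd ⟨c, rfl⟩ hcon
    · intro _ _
      rw [hncard, hdiv]
      push_cast
      omega
  · have he : partitionSet a₁ a₂ = ∅ := by
      ext ⟨m₁, m₂, m₃⟩
      simp only [partitionSet, Set.mem_setOf_eq, Set.mem_empty_iff_false, iff_false, not_and]
      intro h1 h2
      exact h ⟨by omega, by omega⟩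
    refine ⟨by rw [he]; exact Set.finite_empty, by rw [he]; simp, ?_⟩
    intro h1 h2
    exact absurd ⟨h1, h2⟩ h
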